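/- Let r : F̄X ⊗ FY ⟶ Ω be tame with witnesses (r_*, r^*) and assume both comparisons cpX and cpY are symmetric. Then the dagger r† : F̄Y ⊗ FX ⟶ Ω is itself tame, with witnesses (r†)_* = r^* and (r†)^* = r_*; explicitly, cpX ∘ ((r^*)‾ ⊗ id_{FX}) = r† and cpY ∘ (id_{F̄Y} ⊗ r_*) = r†. -/

import Mathlib

open CategoryTheory MonoidalCategory

universe u v

/-- The twist map `τ : (X̄ ⊗ Y)‾ ≅ Ȳ ⊗ X` in an involutive symmetric monoidal category. -/
noncomputable def twist {C : Type u} [Category.{v} C] [MonoidalCategory C]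
    [SymmetricCategory C] (B : C ⥤ C) (ι : 𝟭 C ≅ B ⋙ B)
    (ξ : ∀ X Y : C, B.obj X ⊗ B.obj Y ≅ B.obj (X ⊗ Y)) (X Y : C) :
    B.obj (B.obj X ⊗ Y) ≅ B.obj Y ⊗ X :=
  (ξ (B.obj X) Y).symm ≪≫ tensorIso (ι.app X).symm (Iso.refl (B.obj Y)) ≪≫ β_ X (B.obj Y)

/-- Naturality of the twist. -/
lemma twist_natural {C : Type u} [Category.{v} C] [MonoidalCategory C]
    [SymmetricCategory C] (B : C ⥤ C) (ι : 𝟭 C ≅ B ⋙ B)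
    (ξ : ∀ X Y : C, B.obj X ⊗ B.obj Y ≅ B.obj (X ⊗ Y))
    (hξ : ∀ {X X' Y Y' : C} (f : X ⟶ X') (g : Y ⟶ Y'),
      (B.map f ⊗ₘ B.map g) ≫ (ξ X' Y').hom = (ξ X Y).hom ≫ B.map (f ⊗ₘ g))
    {X X' Y Y' : C} (f : X ⟶ X') (g : Y ⟶ Y') :
    B.map (B.map f ⊗ₘ g) ≫ (twist B ι ξ X' Y').hom =
      (twist B ι ξ X Y).hom ≫ (B.map g ⊗ₘ f) := by
  have hB : B.map (B.map f ⊗ₘ g) =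
      (ξ (B.obj X) Y).inv ≫ (B.map (B.map f) ⊗ₘ B.map g) ≫ (ξ (B.obj X') Y').hom := by
    rw [hξ (B.map f) g, Iso.inv_hom_id_assoc]
  have hι' : B.map (B.map f) ≫ ι.inv.app X' = ι.inv.app X ≫ f := by
    simpa using ι.inv.naturality f
  have key : (B.map (B.map f) ⊗ₘ B.map g) ≫ (ι.inv.app X' ⊗ₘ 𝟙 (B.obj Y')) ≫
        (β_ X' (B.obj Y')).hom
      = (ι.inv.app X ⊗ₘ 𝟙 (B.obj Y)) ≫ (β_ X (B.obj Y)).hom ≫ (B.map g ⊗ₘ f) := by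
    rw [tensorHom_comp_tensorHom_assoc, hι', Category.comp_id]
    simp [MonoidalCategory.tensorHom_def, whisker_exchange]
  simp only [twist, Iso.trans_hom, tensorIso_hom, Iso.symm_hom, Iso.refl_hom, Iso.app_inv,
    Category.assoc, hB, Iso.hom_inv_id_assoc, key]

/-- For a tame relation `r` with symmetric comparisons, the dagger
`r† = cpX ∘ ((r^*)‾ ⊗ id)` is itself tame, with witnesses `(r†)_* = r^*`, `(r†)^* = r_*`. -/
theorem dagger_tame {C : Type u} [Category.{v} C] [MonoidalCategory C]
    [SymmetricCategory C] (B : C ⥤ C)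
    (ι : 𝟭 C ≅ B ⋙ B) (hι : ∀ X : C, B.map (ι.hom.app X) = ι.hom.app (B.obj X))
    (ζ : 𝟙_ C ≅ B.obj (𝟙_ C))
    (ξ : ∀ X Y : C, B.obj X ⊗ B.obj Y ≅ B.obj (X ⊗ Y))
    (hξ : ∀ {X X' Y Y' : C} (f : X ⟶ X') (g : Y ⟶ Y'),
      (B.map f ⊗ₘ B.map g) ≫ (ξ X' Y').hom = (ξ X Y).hom ≫ B.map (f ⊗ₘ g))
    (Ω FX FY : C) (j : B.obj Ω ⟶ Ω)
    (cpX : B.obj FX ⊗ FX ⟶ Ω) (cpY : B.obj FY ⊗ FY ⟶ Ω)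
    -- cpX is symmetric
    (hsymX : (twist B ι ξ FX FX).hom ≫ cpX = B.map cpX ≫ j)
    -- cpY is symmetric
    (hsymY : (twist B ι ξ FY FY).hom ≫ cpY = B.map cpY ≫ j)
    (r : B.obj FX ⊗ FY ⟶ Ω) (rst : FX ⟶ FY) (rco : FY ⟶ FX)
    (hr1 : (B.map rst ⊗ₘ 𝟙 FY) ≫ cpY = r)
    (hr2 : (𝟙 (B.obj FX) ⊗ₘ rco) ≫ cpX = r) :
    (B.map rco ⊗ₘ 𝟙 FX) ≫ cpX = (B.map rco ⊗ₘ 𝟙 FX) ≫ cpX ∧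
    (𝟙 (B.obj FY) ⊗ₘ rst) ≫ cpY = (B.map rco ⊗ₘ 𝟙 FX) ≫ cpX := by
  refine ⟨rfl, ?_⟩
  have h1 : (twist B ι ξ FX FY).hom ≫ (𝟙 (B.obj FY) ⊗ₘ rst) ≫ cpY = B.map r ≫ j := by
    have := twist_natural B ι ξ hξ rst (𝟙 FY)
    rw [B.map_id] at this
    rw [← Category.assoc, ← this, Category.assoc, hsymY, ← Category.assoc,
      ← B.map_comp, hr1]
  have h2 : (twist B ι ξ FX FY).hom ≫ (B.map rco ⊗ₘ 𝟙 FX) ≫ cpX = B.map r ≫ j := by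
    have := twist_natural B ι ξ hξ (𝟙 FX) rco
    rw [B.map_id] at this
    rw [← Category.assoc, ← this, Category.assoc, hsymX, ← Category.assoc,
      ← B.map_comp, hr2]
  have := h1.trans h2.symm
  exact (cancel_epi (twist B ι ξ FX FY).hom).mp this
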